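/- In the Artin braid group B_{m+n} with n ≥ 2, for all 1 ≤ r < i ≤ m the loop element a_i commutes with the conjugated loop σ_{m+1} a_r σ_{m+1}^{−1}: a_i (σ_{m+1} a_r σ_{m+1}^{−1}) = (σ_{m+1} a_r σ_{m+1}^{−1}) a_i. -/
import Mathlib


/-- Defining relations of the Artin braid group on `N` strands, with generators
indexed by `Fin (N-1)` (index `s : Fin (N-1)` corresponds to the 1-based generator
`σ_{s+1}`): the far commutation relations and the braid relations. -/
def braidRels (N : ℕ) : Set (FreeGroup (Fin (N - 1))) :=
  {x | ∃ s t : Fin (N - 1), (s : ℕ) + 2 ≤ (t : ℕ) ∧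
      x = FreeGroup.of s * FreeGroup.of t * (FreeGroup.of s)⁻¹ * (FreeGroup.of t)⁻¹} ∪
  {x | ∃ s t : Fin (N - 1), (s : ℕ) + 1 = (t : ℕ) ∧
      x = FreeGroup.of s * FreeGroup.of t * FreeGroup.of s *
          (FreeGroup.of t)⁻¹ * (FreeGroup.of s)⁻¹ * (FreeGroup.of t)⁻¹}

/-- The Artin braid group on `N` strands. -/
abbrev BraidGroup (N : ℕ) := PresentedGroup (braidRels N)

/-- The generator `σ_s` (1-based, `1 ≤ s ≤ N-1`); junk value `1` out of range. -/
def sig (N s : ℕ) : BraidGroup N :=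
  if h : 1 ≤ s ∧ s ≤ N - 1 then PresentedGroup.of ⟨s - 1, by omega⟩ else 1

/-- The loop element `a_i = σ_m σ_{m-1} ⋯ σ_{i+1} · σ_i² · σ_{i+1}⁻¹ ⋯ σ_m⁻¹`
(so `a_m = σ_m²`) in the braid group on `N` strands, `m` of which are fixed. -/
def loop (N m i : ℕ) : BraidGroup N :=
  (((List.range (m - i)).map (fun l => sig N (m - l))).prod) * (sig N i) ^ 2 *
    (((List.range (m - i)).map (fun l => sig N (m - l))).prod)⁻¹

/-- `λ_l := σ_{m+l} σ_{m+l-1} ⋯ σ_{m+1}`, with `λ_0 := 1`. -/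
def lam (N m l : ℕ) : BraidGroup N :=
  ((List.range l).map (fun t => sig N (m + l - t))).prod

/-- The positive looping `∏_{l=0}^{q-1} λ_l a_j λ_l⁻¹` of a `q`-strand cable of
moving strands around the `j`-th fixed strand. -/
def cable (N m j q : ℕ) : BraidGroup N :=
  ((List.range q).map (fun l => lam N m l * loop N m j * (lam N m l)⁻¹)).prod

/- ### Auxiliary lemmas -/

lemma rel_eq_one {N : ℕ} {x : FreeGroup (Fin (N-1))} (h : x ∈ braidRels N) :
    PresentedGroup.mk (braidRels N) x = 1 := by
  rw [PresentedGroup.mk]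
  exact (QuotientGroup.eq_one_iff _).mpr (Subgroup.subset_normalClosure h)

lemma sig_eq_one {N s : ℕ} (h : ¬(1 ≤ s ∧ s ≤ N - 1)) : sig N s = 1 := by
  rw [sig, dif_neg h]

lemma sig_eq_mk {N s : ℕ} (h1 : 1 ≤ s) (h2 : s ≤ N - 1) :
    sig N s = PresentedGroup.mk (braidRels N) (FreeGroup.of ⟨s - 1, by omega⟩) := by
  rw [sig, dif_pos ⟨h1, h2⟩]; rfl

/-- Far commutation of generators. -/
lemma sig_comm {N : ℕ} (s t : ℕ) (hst : s + 2 ≤ t) :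
    Commute (sig N s) (sig N t) := by
  by_cases hs : 1 ≤ s ∧ s ≤ N - 1
  · by_cases ht : 1 ≤ t ∧ t ≤ N - 1
    · have hmem : (FreeGroup.of (⟨s-1, by omega⟩ : Fin (N-1)) * FreeGroup.of (⟨t-1, by omega⟩ : Fin (N-1)) *
        (FreeGroup.of (⟨s-1, by omega⟩ : Fin (N-1)))⁻¹ * (FreeGroup.of (⟨t-1, by omega⟩ : Fin (N-1)))⁻¹) ∈ braidRels N := by
        left
        exact ⟨⟨s-1, by omega⟩, ⟨t-1, by omega⟩, by simp; omega, rfl⟩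
      have h1 := rel_eq_one hmem
      simp only [map_mul, map_inv] at h1
      rw [mul_inv_eq_one, mul_inv_eq_iff_eq_mul] at h1
      rw [sig_eq_mk hs.1 hs.2, sig_eq_mk ht.1 ht.2]
      exact h1
    · rw [sig_eq_one ht]; exact Commute.one_right _
  · rw [sig_eq_one hs]; exact Commute.one_left _

/-- The braid relation for adjacent generators. -/
lemma sig_braid {N : ℕ} (s : ℕ) (h1 : 1 ≤ s) (h2 : s + 1 ≤ N - 1) :
    sig N s * sig N (s+1) * sig N s = sig N (s+1) * sig N s * sig N (s+1) := by
  have hmem : (FreeGroup.of (⟨s-1, by omega⟩ : Fin (N-1)) * FreeGroup.of (⟨s, by omega⟩ : Fin (N-1)) *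
      FreeGroup.of (⟨s-1, by omega⟩ : Fin (N-1)) * (FreeGroup.of (⟨s, by omega⟩ : Fin (N-1)))⁻¹ *
      (FreeGroup.of (⟨s-1, by omega⟩ : Fin (N-1)))⁻¹ * (FreeGroup.of (⟨s, by omega⟩ : Fin (N-1)))⁻¹) ∈ braidRels N := by
    right
    exact ⟨⟨s-1, by omega⟩, ⟨s, by omega⟩, by simp; omega, rfl⟩
  have h := rel_eq_one hmem
  simp only [map_mul, map_inv] at h
  rw [mul_inv_eq_one, mul_inv_eq_iff_eq_mul, mul_inv_eq_iff_eq_mul] at h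
  rw [sig_eq_mk h1 (by omega), sig_eq_mk (by omega : 1 ≤ s+1) h2]
  simpa using h

/-- The descending chain `σ_p σ_{p-1} ⋯ σ_{p-k+1}` (`k` factors). -/
def chainDown (N : ℕ) : ℕ → ℕ → BraidGroup N
  | _, 0 => 1
  | p, k+1 => sig N p * chainDown N (p-1) k

lemma chainDown_succ (N p k : ℕ) :
    chainDown N p (k+1) = sig N p * chainDown N (p-1) k := rfl

lemma chainDown_zero (N p : ℕ) : chainDown N p 0 = 1 := rfl

lemma chain_eq (N : ℕ) : ∀ (k p : ℕ),
    ((List.range k).map (fun l => sig N (p - l))).prod = chainDown N p k := by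
  intro k
  induction k with
  | zero => intro p; simp [chainDown]
  | succ k ih =>
    intro p
    rw [List.range_succ_eq_map]
    simp only [List.map_cons, List.prod_cons, List.map_map, chainDown, Nat.sub_zero]
    congr 1
    rw [← ih (p-1)]
    congr 1
    apply List.map_congr_left
    intro l _
    simp only [Function.comp_apply]
    have : p - (l + 1) = p - 1 - l := by omega
    rw [this]

lemma comm_low {N : ℕ} (j : ℕ) : ∀ (k p : ℕ), (∀ l < k, j + 2 ≤ p - l) →
    Commute (sig N j) (chainDown N p k) := by
  intro k
  induction k with
  | zero => intro p _; exact Commute.one_right _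
  | succ k ih =>
    intro p h
    exact (sig_comm j p (by have := h 0 (by omega); omega)).mul_right
      (ih (p-1) (fun l hl => by have := h (l+1) (by omega); omega))

lemma comm_high {N : ℕ} (j : ℕ) : ∀ (k p : ℕ), (∀ l < k, (p - l) + 2 ≤ j) →
    Commute (chainDown N p k) (sig N j) := by
  intro k
  induction k with
  | zero => intro p _; exact Commute.one_left _
  | succ k ih =>
    intro p h
    exact ((sig_comm p j (h 0 (by omega))).mul_left
      (ih (p-1) (fun l hl => by have := h (l+1) (by omega); omega)))

lemma split_chain (N : ℕ) : ∀ (k1 k2 p : ℕ),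
    chainDown N p (k1 + k2) = chainDown N p k1 * chainDown N (p - k1) k2 := by
  intro k1
  induction k1 with
  | zero => intro k2 p; simp [chainDown]
  | succ k1 ih =>
    intro k2 p
    have h1 : k1 + 1 + k2 = (k1 + k2) + 1 := by omega
    rw [h1, chainDown_succ, ih k2 (p-1), chainDown_succ, mul_assoc]
    have h2 : p - 1 - k1 = p - (k1 + 1) := by omega
    rw [h2]

/-- Conjugation of `σ_{j+1}` by the chain `σ_p ⋯ σ_q` gives `σ_j`. -/
lemma chain_shift {N : ℕ} (p q j : ℕ) (hq : 1 ≤ q) (hqj : q ≤ j) (hjp : j + 1 ≤ p)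
    (hp : p ≤ N - 1) :
    chainDown N p (p - q + 1) * sig N (j+1) * (chainDown N p (p - q + 1))⁻¹ = sig N j := by
  have hsplit : p - q + 1 = (p - (j+1)) + ((j - q + 1) + 1) := by omega
  rw [hsplit, split_chain, chainDown_succ, chainDown_succ]
  have hpj : p - (p - (j+1)) = j + 1 := by omega
  have hj1 : j + 1 - 1 = j := by omega
  rw [hpj, hj1]
  set A := chainDown N p (p - (j+1)) with hA
  set B := chainDown N (j-1) (j-q) with hB
  have hAj : Commute (sig N j) A :=
    comm_low j (p - (j+1)) p (fun l hl => by omega)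
  have hBj1 : Commute (sig N (j+1)) B :=
    (comm_high (j+1) (j-q) (j-1) (fun l hl => by omega)).symm
  have hbraid := sig_braid (N := N) j (by omega) (by omega)
  calc A * (sig N (j+1) * (sig N j * B)) * sig N (j+1) * (A * (sig N (j+1) * (sig N j * B)))⁻¹
      = A * (sig N (j+1) * sig N j * (B * sig N (j+1) * B⁻¹) * (sig N j)⁻¹ * (sig N (j+1))⁻¹) * A⁻¹ := by
        group
    _ = A * (sig N (j+1) * sig N j * sig N (j+1) * (sig N j)⁻¹ * (sig N (j+1))⁻¹) * A⁻¹ := by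
        rw [hBj1.symm.eq]; group
    _ = A * (sig N j * sig N (j+1) * sig N j * (sig N j)⁻¹ * (sig N (j+1))⁻¹) * A⁻¹ := by
        rw [← hbraid]
    _ = A * sig N j * A⁻¹ := by group
    _ = sig N j := by rw [← hAj.eq]; group

lemma shift_sig {N m r : ℕ} (hr : 1 ≤ r) (hN : m + 1 ≤ N - 1) (j : ℕ)
    (hj1 : r + 1 ≤ j) (hj2 : j ≤ m) :
    (chainDown N (m+1) (m - r + 1))⁻¹ * sig N j * chainDown N (m+1) (m - r + 1)
      = sig N (j+1) := by
  have h := chain_shift (N := N) (m+1) (r+1) j (by omega) hj1 (by omega) hN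
  have he : (m+1) - (r+1) + 1 = m - r + 1 := by omega
  rw [he] at h
  rw [← h]; group

lemma conj_chain {N m r : ℕ} (hr : 1 ≤ r) (hN : m + 1 ≤ N - 1) :
    ∀ (k p : ℕ), (∀ l < k, r + 1 ≤ p - l ∧ p - l ≤ m) →
    (chainDown N (m+1) (m - r + 1))⁻¹ * chainDown N p k * chainDown N (m+1) (m - r + 1)
      = chainDown N (p+1) k := by
  intro k
  induction k with
  | zero => intro p _; rw [chainDown_zero, chainDown_zero]; group
  | succ k ih =>
    intro p h
    have hp1 : 1 ≤ p := by have := h 0 (by omega); omega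
    have e1 := shift_sig (N := N) hr hN p (h 0 (by omega)).1 (h 0 (by omega)).2
    have e2 := ih (p-1) (fun l hl => by have := h (l+1) (by omega); omega)
    have e3 : p - 1 + 1 = p := by omega
    rw [e3] at e2
    have hsrc : chainDown N p (k+1) = sig N p * chainDown N (p-1) k := chainDown_succ N p k
    have hgoal : chainDown N (p+1) (k+1) = sig N (p+1) * chainDown N p k := by
      rw [chainDown_succ]; norm_num
    rw [hsrc, hgoal, ← e1, ← e2]
    group

/-- For `r < i`, the loop `a_i` commutes with the conjugated loop
`σ_{m+1} a_r σ_{m+1}⁻¹` in the braid group `B_{m+n}` with `n ≥ 2`. -/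
theorem loop_conjugated_loop_commute (m n i r : ℕ) (hm : 1 ≤ m) (hn : 2 ≤ n)
    (hr1 : 1 ≤ r) (hri : r < i) (hi2 : i ≤ m) :
    loop (m + n) m i * (sig (m + n) (m + 1) * loop (m + n) m r * (sig (m + n) (m + 1))⁻¹) =
      (sig (m + n) (m + 1) * loop (m + n) m r * (sig (m + n) (m + 1))⁻¹) *
        loop (m + n) m i := by
  set N := m + n with hNdef
  have hN : m + 1 ≤ N - 1 := by omega
  rw [loop, loop, chain_eq, chain_eq]
  set F := chainDown N (m+1) (m - r + 1) with hF
  have hFs : sig N (m+1) * chainDown N m (m-r) = F := by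
    rw [hF]
    have : m - r + 1 = (m - r) + 1 := rfl
    rw [this, chainDown_succ]
    norm_num
  set Ci := chainDown N m (m-i) with hCi
  set X := Ci * (sig N i)^2 * Ci⁻¹ with hX
  have hb : sig N (m+1) * (chainDown N m (m-r) * (sig N r)^2 * (chainDown N m (m-r))⁻¹) *
      (sig N (m+1))⁻¹ = F * (sig N r)^2 * F⁻¹ := by
    rw [← hFs]; group
  rw [hb]
  have e1 : F⁻¹ * Ci * F = chainDown N (m+1) (m-i) :=
    conj_chain hr1 hN (m-i) m (fun l hl => by omega)
  have e2 : F⁻¹ * sig N i * F = sig N (i+1) :=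
    shift_sig hr1 hN i (by omega) hi2
  have key : F⁻¹ * X * F =
      chainDown N (m+1) (m-i) * (sig N (i+1))^2 * (chainDown N (m+1) (m-i))⁻¹ := by
    have expand : F⁻¹ * X * F =
        (F⁻¹*Ci*F) * ((F⁻¹ * sig N i * F) * (F⁻¹ * sig N i * F)) * (F⁻¹*Ci*F)⁻¹ := by
      rw [hX, pow_two]; group
    rw [expand, e1, e2, ← pow_two]
  have c1 : Commute (sig N r) (chainDown N (m+1) (m-i)) :=
    comm_low r (m-i) (m+1) (fun l hl => by omega)
  have c2 : Commute (sig N r) (sig N (i+1)) := sig_comm r (i+1) (by omega)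
  have comm : Commute ((sig N r)^2)
      (chainDown N (m+1) (m-i) * (sig N (i+1))^2 * (chainDown N (m+1) (m-i))⁻¹) :=
    (((c1.mul_right (c2.pow_right 2)).mul_right c1.inv_right)).pow_left 2
  have hcomm : (F⁻¹ * X * F) * (sig N r)^2 = (sig N r)^2 * (F⁻¹ * X * F) := by
    rw [key]; exact comm.symm.eq
  calc X * (F * (sig N r)^2 * F⁻¹)
      = F * ((F⁻¹ * X * F) * (sig N r)^2) * F⁻¹ := by group
    _ = F * ((sig N r)^2 * (F⁻¹ * X * F)) * F⁻¹ := by rw [hcomm]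
    _ = (F * (sig N r)^2 * F⁻¹) * X := by group
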